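/- Let h : ℂ → ℂ be continuously differentiable, mapping the open unit disc 𝔻 bijectively onto 𝔻 with everywhere positive Jacobian on 𝔻, and let f : ℂ → ℂ be continuously differentiable with f(h(w)) = w for all w ∈ 𝔻. For a map u differentiable at a point z define u_z := ((fderiv ℝ u z) 1 − Complex.I • (fderiv ℝ u z) Complex.I)/2, u_z̄ := ((fderiv ℝ u z) 1 + Complex.I • (fderiv ℝ u z) Complex.I)/2, J(z,u) := |u_z|² − |u_z̄|², and 𝕂(z,u) := (|u_z|² + |u_z̄|²)/(|u_z|² − |u_z̄|²). Let A : ℝ → ℝ be continuous and nonnegative, and assume z ↦ A(𝕂(z,f)) is integrable on 𝔻. Then w ↦ A(𝕂(w,h))·J(w,h) is integrable on 𝔻 and ∫_𝔻 A(𝕂(w,h))·J(w,h) dw = ∫_𝔻 A(𝕂(z,f)) dz. -/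

import Mathlib

open MeasureTheory

/-- The Wirtinger derivative `u_z` of `u : ℂ → ℂ` at `z`. -/
noncomputable def wirtingerDz (u : ℂ → ℂ) (z : ℂ) : ℂ :=
  ((fderiv ℝ u z) 1 - Complex.I • (fderiv ℝ u z) Complex.I) / 2

/-- The Wirtinger derivative `u_z̄` of `u : ℂ → ℂ` at `z`. -/
noncomputable def wirtingerDzbar (u : ℂ → ℂ) (z : ℂ) : ℂ :=
  ((fderiv ℝ u z) 1 + Complex.I • (fderiv ℝ u z) Complex.I) / 2

/-- The Jacobian determinant `J(z,u) = |u_z|² − |u_z̄|²`. -/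
noncomputable def jacobianDet (u : ℂ → ℂ) (z : ℂ) : ℝ :=
  ‖wirtingerDz u z‖ ^ 2 - ‖wirtingerDzbar u z‖ ^ 2

/-- The distortion functional `𝕂(z,u) = (|u_z|² + |u_z̄|²)/(|u_z|² − |u_z̄|²)`. -/
noncomputable def distortionK (u : ℂ → ℂ) (z : ℂ) : ℝ :=
  (‖wirtingerDz u z‖ ^ 2 + ‖wirtingerDzbar u z‖ ^ 2) /
    (‖wirtingerDz u z‖ ^ 2 - ‖wirtingerDzbar u z‖ ^ 2)

/-- Duality of energies `E*_A(h) = E_A(f)`: if `h` is a `C¹` map taking the unit disc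
`𝔻` bijectively onto itself with positive Jacobian on `𝔻`, `f` is `C¹` with
`f ∘ h = id` on `𝔻`, `A : ℝ → ℝ` is continuous and nonnegative, and
`z ↦ A(𝕂(z,f))` is integrable on `𝔻`, then `w ↦ A(𝕂(w,h))·J(w,h)` is integrable
on `𝔻` and `∫_𝔻 A(𝕂(w,h))·J(w,h) dw = ∫_𝔻 A(𝕂(z,f)) dz`. -/
lemma clm_apply_eq (L : ℂ →L[ℝ] ℂ) (v : ℂ) :
    L v = ((L 1 - Complex.I * L Complex.I)/2) * v
        + ((L 1 + Complex.I * L Complex.I)/2) * (starRingEnd ℂ) v := by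
  have hv : v = (v.re : ℝ) • (1:ℂ) + (v.im : ℝ) • Complex.I := by
    simp [Complex.real_smul, Complex.re_add_im]
  rw [hv, map_add, L.map_smul, L.map_smul]
  simp only [Complex.real_smul, map_add, map_mul, Complex.conj_ofReal, Complex.conj_I, mul_one]
  have hI := Complex.I_sq
  ring_nf
  linear_combination (L Complex.I) * (v.im : ℂ) * hI

-- key pointwise lemma
lemma key_inv (h f : ℂ → ℂ) (hh : ContDiff ℝ 1 h) (hf : ContDiff ℝ 1 f)
    (w : ℂ) (hw : w ∈ Metric.ball (0:ℂ) 1)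
    (hJw : 0 < jacobianDet h w)
    (hinv : ∀ w ∈ Metric.ball (0 : ℂ) 1, f (h w) = w) :
    distortionK f (h w) = distortionK h w := by
  set L := fderiv ℝ h w with hL
  set M := fderiv ℝ f (h w) with hM
  have hdiffh : DifferentiableAt ℝ h w := (hh.differentiable one_ne_zero).differentiableAt
  have hdifff : DifferentiableAt ℝ f (h w) := (hf.differentiable one_ne_zero).differentiableAt
  have heq : (fun w' => f (h w')) =ᶠ[nhds w] id := by
    filter_upwards [Metric.isOpen_ball.mem_nhds hw] with w' hw' using hinv w' hw'
  have hcomp : M.comp L = ContinuousLinearMap.id ℝ ℂ := by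
    have h1 : fderiv ℝ (f ∘ h) w = M.comp L := fderiv_comp w hdifff hdiffh
    have h2 : fderiv ℝ (fun w' => f (h w')) w = fderiv ℝ (id : ℂ → ℂ) w := heq.fderiv_eq
    rw [Function.comp_def] at h1
    rw [h1, fderiv_id] at h2
    exact h2
  set p := wirtingerDz h w with hp
  set q := wirtingerDzbar h w with hq
  have hpL : p = (L 1 - Complex.I * L Complex.I)/2 := by
    simp [hp, wirtingerDz, smul_eq_mul, hL]
  have hqL : q = (L 1 + Complex.I * L Complex.I)/2 := by
    simp [hq, wirtingerDzbar, smul_eq_mul, hL]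
  set d := jacobianDet h w with hd
  have hdval : d = ‖p‖ ^ 2 - ‖q‖ ^ 2 := rfl
  have hdne : d ≠ 0 := ne_of_gt hJw
  have hdCne : (d : ℂ) ≠ 0 := by exact_mod_cast hdne
  have hdC : (d : ℂ) = p * (starRingEnd ℂ) p - q * (starRingEnd ℂ) q := by
    rw [Complex.mul_conj, Complex.mul_conj]
    norm_cast
    rw [hdval, Complex.sq_norm, Complex.sq_norm]
  have hMu : ∀ u : ℂ, M u = ((starRingEnd ℂ) p * u - q * (starRingEnd ℂ) u) / d := by
    intro u
    set v : ℂ := ((starRingEnd ℂ) p * u - q * (starRingEnd ℂ) u) / d with hv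
    have hLv : L v = u := by
      rw [clm_apply_eq L v, ← hpL, ← hqL, hv]
      simp only [map_div₀, map_sub, map_mul, Complex.conj_conj, Complex.conj_ofReal]
      field_simp
      linear_combination -u * hdC
    calc M u = M (L v) := by rw [hLv]
    _ = (M.comp L) v := rfl
    _ = v := by rw [hcomp]; rfl
  have hDz : wirtingerDz f (h w) = (starRingEnd ℂ) p / d := by
    rw [wirtingerDz, ← hM, hMu, hMu, smul_eq_mul]
    simp only [map_one, Complex.conj_I]
    field_simp
    linear_combination (-(starRingEnd ℂ) p - q) * Complex.I_sq
  have hDzbar : wirtingerDzbar f (h w) = -q / d := by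
    rw [wirtingerDzbar, ← hM, hMu, hMu, smul_eq_mul]
    simp only [map_one, Complex.conj_I]
    field_simp
    linear_combination ((starRingEnd ℂ) p + q) * Complex.I_sq
  have habs : ∀ x : ℂ, ‖x / d‖ ^ 2 = ‖x‖ ^ 2 / d ^ 2 := by
    intro x
    rw [norm_div, div_pow, Complex.norm_real, Real.norm_eq_abs, abs_of_pos hJw]
  rw [distortionK, hDz, hDzbar, habs, habs, Complex.norm_conj, norm_neg]
  rw [← add_div, ← sub_div, div_div_div_cancel_right₀ (pow_ne_zero 2 hdne)]
  rfl

lemma clm_det (L : ℂ →L[ℝ] ℂ) :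
    L.det = ‖(L 1 - Complex.I * L Complex.I)/2‖ ^ 2
          - ‖(L 1 + Complex.I * L Complex.I)/2‖ ^ 2 := by
  have h1 : L.det = LinearMap.det (L : ℂ →ₗ[ℝ] ℂ) := rfl
  have h2 : ∀ x : ℂ, ‖x/2‖ ^ 2 = ((x.re)^2 + (x.im)^2)/4 := by
    intro x
    rw [norm_div, Complex.norm_two, div_pow, Complex.sq_norm, Complex.normSq_apply]
    ring
  rw [h1, ← LinearMap.det_toMatrix Complex.basisOneI, Matrix.det_fin_two, h2, h2]
  simp only [LinearMap.toMatrix_apply, ContinuousLinearMap.coe_coe,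
    Complex.coe_basisOneI_repr, Complex.coe_basisOneI, Matrix.cons_val_zero, Matrix.cons_val_one,
    Matrix.head_cons]
  simp only [Complex.sub_re, Complex.sub_im, Complex.add_re, Complex.add_im,
    Complex.mul_re, Complex.mul_im, Complex.I_re, Complex.I_im]
  ring

theorem energy_duality (h f : ℂ → ℂ) (A : ℝ → ℝ)
    (hh : ContDiff ℝ 1 h) (hf : ContDiff ℝ 1 f)
    (hbij : Set.BijOn h (Metric.ball (0 : ℂ) 1) (Metric.ball (0 : ℂ) 1))
    (hJ : ∀ w ∈ Metric.ball (0 : ℂ) 1, 0 < jacobianDet h w)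
    (hinv : ∀ w ∈ Metric.ball (0 : ℂ) 1, f (h w) = w)
    (hAcont : Continuous A) (hAnonneg : ∀ t : ℝ, 0 ≤ A t)
    (hint : IntegrableOn (fun z => A (distortionK f z)) (Metric.ball (0 : ℂ) 1) volume) :
    IntegrableOn (fun w => A (distortionK h w) * jacobianDet h w)
      (Metric.ball (0 : ℂ) 1) volume ∧
    ∫ w in Metric.ball (0 : ℂ) 1, A (distortionK h w) * jacobianDet h w =
      ∫ z in Metric.ball (0 : ℂ) 1, A (distortionK f z) := by
  set s := Metric.ball (0:ℂ) 1 with hsdef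
  have hs : MeasurableSet s := measurableSet_ball
  have hderiv : ∀ w ∈ s, HasFDerivWithinAt h (fderiv ℝ h w) s w := fun w _ =>
    ((hh.differentiable one_ne_zero).differentiableAt.hasFDerivAt).hasFDerivWithinAt
  have hdet : ∀ w ∈ s, (fderiv ℝ h w).det = jacobianDet h w := by
    intro w _
    rw [clm_det]
    simp [jacobianDet, wirtingerDz, wirtingerDzbar, smul_eq_mul]
  have hEq : Set.EqOn (fun w => |(fderiv ℝ h w).det| • A (distortionK f (h w)))
      (fun w => A (distortionK h w) * jacobianDet h w) s := by
    intro w hw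
    simp only [smul_eq_mul]
    rw [hdet w hw, abs_of_pos (hJ w hw), key_inv h f hh hf w hw (hJ w hw) hinv, mul_comm]
  have himg : h '' s = s := hbij.image_eq
  have hint' : IntegrableOn (fun z => A (distortionK f z)) (h '' s) volume := by
    rw [himg]; exact hint
  have hInt2 := (integrableOn_image_iff_integrableOn_abs_det_fderiv_smul volume hs hderiv
    hbij.injOn (fun z => A (distortionK f z))).mp hint'
  refine ⟨hInt2.congr_fun hEq hs, ?_⟩
  have hIeq := integral_image_eq_integral_abs_det_fderiv_smul volume hs hderiv
    hbij.injOn (fun z => A (distortionK f z))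
  rw [himg] at hIeq
  rw [hIeq]
  exact setIntegral_congr_fun hs fun w hw => (hEq hw).symm
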